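/- Let T̃ be the tetrahedron with vertices p1=(0,0,0), p2=(h1,0,0), p3=(0,0,h3), p4=(0,h2,h3), and let u(x) = (x1 x3, −x2 x3, 0). Then the vector field p(x) = h3·((2/5)x1, −(3/5)x2, −h3/10 + (1/5)x3) has components in P₁ and its normal trace moments against P₁ on each face of T̃ agree with those of u; i.e., p is the BDM₁ interpolant of u on T̃. -/

import Mathlib

open MeasureTheory intervalIntegral

/-- Dot product on `ℝ × ℝ × ℝ` (viewed as `ℝ³`). -/
def dot3 (a b : ℝ × ℝ × ℝ) : ℝ := a.1 * b.1 + a.2.1 * b.2.1 + a.2.2 * b.2.2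

/-- Flux moment `∫_e (F·n) z dS` over the (triangular) face with vertices `a, b, c`,
where `N = ±(b-a)×(c-a)` is the area-weighted outward normal supplied by the caller;
with the parameterization `γ(s,t) = a + s(b-a) + t(c-a)` over `{s,t ≥ 0, s+t ≤ 1}`,
the surface element exactly cancels the normalization of the normal. -/
noncomputable def faceFluxMoment (F : ℝ × ℝ × ℝ → ℝ × ℝ × ℝ) (a b c N : ℝ × ℝ × ℝ)
    (z : ℝ × ℝ × ℝ → ℝ) : ℝ :=
  ∫ s in (0:ℝ)..1, ∫ t in (0:ℝ)..(1 - s),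
    dot3 (F (a + s • (b - a) + t • (c - a))) N * z (a + s • (b - a) + t • (c - a))

/-- The field `u(x) = (x₁x₃, -x₂x₃, 0)`. -/
def uField3 : ℝ × ℝ × ℝ → ℝ × ℝ × ℝ := fun p => (p.1 * p.2.2, -(p.2.1 * p.2.2), 0)

/-- The claimed BDM₁ interpolant `p(x) = h₃ ((2/5)x₁, -(3/5)x₂, -h₃/10 + (1/5)x₃)`. -/
noncomputable def pField3 (h3 : ℝ) : ℝ × ℝ × ℝ → ℝ × ℝ × ℝ :=
  fun p => (h3 * (2 / 5 * p.1), h3 * (-(3 / 5) * p.2.1), h3 * (-h3 / 10 + 1 / 5 * p.2.2))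

/-- On the tetrahedron `T̃` with vertices `p1=(0,0,0)`, `p2=(h₁,0,0)`, `p3=(0,0,h₃)`,
`p4=(0,h₂,h₃)`, the field `p` has affine components and its outward normal flux moments
against all affine functions `z` agree with those of `u = (x₁x₃, -x₂x₃, 0)` on each of the
four faces; i.e. `p` is the BDM₁ interpolant of `u` on `T̃`. -/

lemma cubicAnti (a b c d t : ℝ) :
    HasDerivAt (fun x : ℝ => a*x + b*x^2/2 + c*x^3/3 + d*x^4/4)
      (a + b*t + c*t^2 + d*t^3) t := by
  have H : HasDerivAt (fun x : ℝ => a*x + b*x^2/2 + c*x^3/3 + d*x^4/4) _ t := ((((hasDerivAt_id' (x := t)).const_mul a).add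
      (((hasDerivAt_pow 2 t).const_mul b).div_const 2)).add
      (((hasDerivAt_pow 3 t).const_mul c).div_const 3)).add
      (((hasDerivAt_pow 4 t).const_mul d).div_const 4)
  convert H using 1
  push_cast; ring

lemma int3 (a b c d x : ℝ) :
    (∫ t in (0:ℝ)..x, (a + b*t + c*t^2 + d*t^3)) =
      a*x + b*x^2/2 + c*x^3/3 + d*x^4/4 := by
  have h := intervalIntegral.integral_eq_sub_of_hasDerivAt
    (f := fun x : ℝ => a*x + b*x^2/2 + c*x^3/3 + d*x^4/4)
    (fun t _ => cubicAnti a b c d t)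
    ((by fun_prop : Continuous fun t : ℝ => a + b*t + c*t^2 + d*t^3).intervalIntegrable 0 x)
  rw [h]; ring

lemma quarticAnti (a b c d e t : ℝ) :
    HasDerivAt (fun x : ℝ => a*x + b*x^2/2 + c*x^3/3 + d*x^4/4 + e*x^5/5)
      (a + b*t + c*t^2 + d*t^3 + e*t^4) t := by
  have H : HasDerivAt (fun x : ℝ => a*x + b*x^2/2 + c*x^3/3 + d*x^4/4 + e*x^5/5) _ t := (((((hasDerivAt_id' (x := t)).const_mul a).add
      (((hasDerivAt_pow 2 t).const_mul b).div_const 2)).add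
      (((hasDerivAt_pow 3 t).const_mul c).div_const 3)).add
      (((hasDerivAt_pow 4 t).const_mul d).div_const 4)).add
      (((hasDerivAt_pow 5 t).const_mul e).div_const 5)
  convert H using 1
  push_cast; ring

lemma int4 (a b c d e : ℝ) :
    (∫ s in (0:ℝ)..1, (a + b*s + c*s^2 + d*s^3 + e*s^4)) =
      a + b/2 + c/3 + d/4 + e/5 := by
  have h := intervalIntegral.integral_eq_sub_of_hasDerivAt
    (f := fun x : ℝ => a*x + b*x^2/2 + c*x^3/3 + d*x^4/4 + e*x^5/5)
    (fun t _ => quarticAnti a b c d e t)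
    ((by fun_prop : Continuous fun t : ℝ => a + b*t + c*t^2 + d*t^3 + e*t^4).intervalIntegrable 0 1)
  rw [h]; ring

lemma tri_integral (f : ℝ → ℝ → ℝ)
    (k00 k10 k01 k20 k11 k02 k30 k21 k12 k03 : ℝ)
    (hf : ∀ s t : ℝ, f s t = k00 + k10*s + k01*t + k20*s^2 + k11*s*t + k02*t^2
      + k30*s^3 + k21*s^2*t + k12*s*t^2 + k03*t^3) :
    (∫ s in (0:ℝ)..1, ∫ t in (0:ℝ)..(1-s), f s t) =
      k00/2 + k10/6 + k01/6 + k20/12 + k11/24 + k02/12 + k30/20 + k21/60 + k12/60 + k03/20 := by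
  have inner : ∀ s : ℝ, (∫ t in (0:ℝ)..(1-s), f s t) =
      (k00+k10*s+k20*s^2+k30*s^3)*(1-s) + (k01+k11*s+k21*s^2)*(1-s)^2/2
        + (k02+k12*s)*(1-s)^3/3 + k03*(1-s)^4/4 := by
    intro s
    have h1 : Set.EqOn (fun t => f s t)
        (fun t => (k00+k10*s+k20*s^2+k30*s^3) + (k01+k11*s+k21*s^2)*t
          + (k02+k12*s)*t^2 + k03*t^3) (Set.uIcc 0 (1-s)) := by
      intro t _
      simp only
      rw [hf]; ring
    rw [intervalIntegral.integral_congr h1,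
      int3 (k00+k10*s+k20*s^2+k30*s^3) (k01+k11*s+k21*s^2) (k02+k12*s) k03 (1-s)]
  have h2 : Set.EqOn (fun s => ∫ t in (0:ℝ)..(1-s), f s t)
      (fun s => (k00 + k01/2 + k02/3 + k03/4)
        + (k10 - k00 + (k11 - 2*k01)/2 + (k12 - 3*k02)/3 - k03)*s
        + (k20 - k10 + (k01 - 2*k11 + k21)/2 + (3*k02 - 3*k12)/3 + 6*k03/4)*s^2
        + (k30 - k20 + (k11 - 2*k21)/2 + (3*k12 - k02)/3 - k03)*s^3
        + (-k30 + k21/2 - k12/3 + k03/4)*s^4) (Set.uIcc 0 1) := by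
    intro s _
    simp only
    rw [inner s]; ring
  rw [intervalIntegral.integral_congr h2, int4]
  ring

theorem pField3_is_BDM1_interpolant (h1 h2 h3 : ℝ) (h1p : 0 < h1) (h2p : 0 < h2)
    (h3p : 0 < h3) :
    (∃ A : Fin 3 → ℝ, ∃ B : Fin 3 → Fin 3 → ℝ, ∀ p : ℝ × ℝ × ℝ,
        pField3 h3 p = (A 0 + B 0 0 * p.1 + B 0 1 * p.2.1 + B 0 2 * p.2.2,
          A 1 + B 1 0 * p.1 + B 1 1 * p.2.1 + B 1 2 * p.2.2,
          A 2 + B 2 0 * p.1 + B 2 1 * p.2.1 + B 2 2 * p.2.2)) ∧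
    (∀ c0 c1 c2 c3 : ℝ,
      -- face {p1,p2,p3}, outward area normal (0, -h₁h₃, 0)
      faceFluxMoment (pField3 h3) (0,0,0) (h1,0,0) (0,0,h3) (0, -(h1*h3), 0)
          (fun p => c0 + c1 * p.1 + c2 * p.2.1 + c3 * p.2.2) =
        faceFluxMoment uField3 (0,0,0) (h1,0,0) (0,0,h3) (0, -(h1*h3), 0)
          (fun p => c0 + c1 * p.1 + c2 * p.2.1 + c3 * p.2.2)) ∧
    (∀ c0 c1 c2 c3 : ℝ,
      -- face {p1,p2,p4}, outward area normal (0, h₁h₃, -h₁h₂)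
      faceFluxMoment (pField3 h3) (0,0,0) (h1,0,0) (0,h2,h3) (0, h1*h3, -(h1*h2))
          (fun p => c0 + c1 * p.1 + c2 * p.2.1 + c3 * p.2.2) =
        faceFluxMoment uField3 (0,0,0) (h1,0,0) (0,h2,h3) (0, h1*h3, -(h1*h2))
          (fun p => c0 + c1 * p.1 + c2 * p.2.1 + c3 * p.2.2)) ∧
    (∀ c0 c1 c2 c3 : ℝ,
      -- face {p1,p3,p4}, outward area normal (-h₂h₃, 0, 0)
      faceFluxMoment (pField3 h3) (0,0,0) (0,0,h3) (0,h2,h3) (-(h2*h3), 0, 0)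
          (fun p => c0 + c1 * p.1 + c2 * p.2.1 + c3 * p.2.2) =
        faceFluxMoment uField3 (0,0,0) (0,0,h3) (0,h2,h3) (-(h2*h3), 0, 0)
          (fun p => c0 + c1 * p.1 + c2 * p.2.1 + c3 * p.2.2)) ∧
    (∀ c0 c1 c2 c3 : ℝ,
      -- face {p2,p3,p4}, outward area normal (h₂h₃, 0, h₁h₂)
      faceFluxMoment (pField3 h3) (h1,0,0) (0,0,h3) (0,h2,h3) (h2*h3, 0, h1*h2)
          (fun p => c0 + c1 * p.1 + c2 * p.2.1 + c3 * p.2.2) =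
        faceFluxMoment uField3 (h1,0,0) (0,0,h3) (0,h2,h3) (h2*h3, 0, h1*h2)
          (fun p => c0 + c1 * p.1 + c2 * p.2.1 + c3 * p.2.2)) := by
  refine ⟨?_, ?_, ?_, ?_, ?_⟩
  · refine ⟨![0, 0, h3 * (-h3 / 10)], ![![h3 * (2/5), 0, 0], ![0, -(h3 * (3/5)), 0], ![0, 0, h3 * (1/5)]], fun p => ?_⟩
    simp only [pField3, Matrix.cons_val_zero, Matrix.cons_val_one, Matrix.head_cons,
      Matrix.cons_val_two, Matrix.tail_cons, Prod.mk.injEq]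
    refine ⟨by ring, by ring, by ring⟩
  · intro c0 c1 c2 c3
    have Lp : faceFluxMoment (pField3 h3) (0,0,0) (h1,0,0) (0,0,h3) (0, -(h1*h3), 0)
        (fun p => c0 + c1 * p.1 + c2 * p.2.1 + c3 * p.2.2) =
        0/2 + 0/6 + 0/6 + 0/12 + 0/24 + 0/12 + 0/20 + 0/60 + 0/60 + 0/20 := by
      unfold faceFluxMoment
      exact tri_integral _ 0 0 0 0 0 0 0 0 0 0
        (by intro s t
            simp only [dot3, pField3, uField3, Prod.mk_add_mk, Prod.mk_sub_mk, Prod.smul_mk,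
              smul_eq_mul]
            ring)
    have Lu : faceFluxMoment (uField3) (0,0,0) (h1,0,0) (0,0,h3) (0, -(h1*h3), 0)
        (fun p => c0 + c1 * p.1 + c2 * p.2.1 + c3 * p.2.2) =
        0/2 + 0/6 + 0/6 + 0/12 + 0/24 + 0/12 + 0/20 + 0/60 + 0/60 + 0/20 := by
      unfold faceFluxMoment
      exact tri_integral _ 0 0 0 0 0 0 0 0 0 0
        (by intro s t
            simp only [dot3, pField3, uField3, Prod.mk_add_mk, Prod.mk_sub_mk, Prod.smul_mk,
              smul_eq_mul]
            ring)
    rw [Lp, Lu]; try ring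
  · intro c0 c1 c2 c3
    have Lp : faceFluxMoment (pField3 h3) (0,0,0) (h1,0,0) (0,h2,h3) (0, h1*h3, -(h1*h2))
        (fun p => c0 + c1 * p.1 + c2 * p.2.1 + c3 * p.2.2) =
        (((1:ℝ)/10)*h1*h2*h3*h3*c0)/2 + (((1:ℝ)/10)*h1*h1*h2*h3*h3*c1)/6 + (((-4:ℝ)/5)*h1*h2*h3*h3*c0 + ((1:ℝ)/10)*h1*h2*h3*h3*h3*c3 + ((1:ℝ)/10)*h1*h2*h2*h3*h3*c2)/6 + 0/12 + (((-4:ℝ)/5)*h1*h1*h2*h3*h3*c1)/24 + (((-4:ℝ)/5)*h1*h2*h3*h3*h3*c3 + ((-4:ℝ)/5)*h1*h2*h2*h3*h3*c2)/12 + 0/20 + 0/60 + 0/60 + 0/20 := by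
      unfold faceFluxMoment
      exact tri_integral _ (((1:ℝ)/10)*h1*h2*h3*h3*c0) (((1:ℝ)/10)*h1*h1*h2*h3*h3*c1) (((-4:ℝ)/5)*h1*h2*h3*h3*c0 + ((1:ℝ)/10)*h1*h2*h3*h3*h3*c3 + ((1:ℝ)/10)*h1*h2*h2*h3*h3*c2) 0 (((-4:ℝ)/5)*h1*h1*h2*h3*h3*c1) (((-4:ℝ)/5)*h1*h2*h3*h3*h3*c3 + ((-4:ℝ)/5)*h1*h2*h2*h3*h3*c2) 0 0 0 0
        (by intro s t
            simp only [dot3, pField3, uField3, Prod.mk_add_mk, Prod.mk_sub_mk, Prod.smul_mk,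
              smul_eq_mul]
            ring)
    have Lu : faceFluxMoment (uField3) (0,0,0) (h1,0,0) (0,h2,h3) (0, h1*h3, -(h1*h2))
        (fun p => c0 + c1 * p.1 + c2 * p.2.1 + c3 * p.2.2) =
        0/2 + 0/6 + 0/6 + 0/12 + 0/24 + ((-1:ℝ)*h1*h2*h3*h3*c0)/12 + 0/20 + 0/60 + ((-1:ℝ)*h1*h1*h2*h3*h3*c1)/60 + ((-1:ℝ)*h1*h2*h3*h3*h3*c3 + (-1:ℝ)*h1*h2*h2*h3*h3*c2)/20 := by
      unfold faceFluxMoment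
      exact tri_integral _ 0 0 0 0 0 ((-1:ℝ)*h1*h2*h3*h3*c0) 0 0 ((-1:ℝ)*h1*h1*h2*h3*h3*c1) ((-1:ℝ)*h1*h2*h3*h3*h3*c3 + (-1:ℝ)*h1*h2*h2*h3*h3*c2)
        (by intro s t
            simp only [dot3, pField3, uField3, Prod.mk_add_mk, Prod.mk_sub_mk, Prod.smul_mk,
              smul_eq_mul]
            ring)
    rw [Lp, Lu]; try ring
  · intro c0 c1 c2 c3
    have Lp : faceFluxMoment (pField3 h3) (0,0,0) (0,0,h3) (0,h2,h3) (-(h2*h3), 0, 0)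
        (fun p => c0 + c1 * p.1 + c2 * p.2.1 + c3 * p.2.2) =
        0/2 + 0/6 + 0/6 + 0/12 + 0/24 + 0/12 + 0/20 + 0/60 + 0/60 + 0/20 := by
      unfold faceFluxMoment
      exact tri_integral _ 0 0 0 0 0 0 0 0 0 0
        (by intro s t
            simp only [dot3, pField3, uField3, Prod.mk_add_mk, Prod.mk_sub_mk, Prod.smul_mk,
              smul_eq_mul]
            ring)
    have Lu : faceFluxMoment (uField3) (0,0,0) (0,0,h3) (0,h2,h3) (-(h2*h3), 0, 0)
        (fun p => c0 + c1 * p.1 + c2 * p.2.1 + c3 * p.2.2) =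
        0/2 + 0/6 + 0/6 + 0/12 + 0/24 + 0/12 + 0/20 + 0/60 + 0/60 + 0/20 := by
      unfold faceFluxMoment
      exact tri_integral _ 0 0 0 0 0 0 0 0 0 0
        (by intro s t
            simp only [dot3, pField3, uField3, Prod.mk_add_mk, Prod.mk_sub_mk, Prod.smul_mk,
              smul_eq_mul]
            ring)
    rw [Lp, Lu]; try ring
  · intro c0 c1 c2 c3
    have Lp : faceFluxMoment (pField3 h3) (h1,0,0) (0,0,h3) (0,h2,h3) (h2*h3, 0, h1*h2)
        (fun p => c0 + c1 * p.1 + c2 * p.2.1 + c3 * p.2.2) =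
        (((3:ℝ)/10)*h1*h2*h3*h3*c0 + ((3:ℝ)/10)*h1*h1*h2*h3*h3*c1)/2 + (((-1:ℝ)/5)*h1*h2*h3*h3*c0 + ((3:ℝ)/10)*h1*h2*h3*h3*h3*c3 + ((-1:ℝ)/2)*h1*h1*h2*h3*h3*c1)/6 + (((-1:ℝ)/5)*h1*h2*h3*h3*c0 + ((3:ℝ)/10)*h1*h2*h3*h3*h3*c3 + ((3:ℝ)/10)*h1*h2*h2*h3*h3*c2 + ((-1:ℝ)/2)*h1*h1*h2*h3*h3*c1)/6 + (((-1:ℝ)/5)*h1*h2*h3*h3*h3*c3 + ((1:ℝ)/5)*h1*h1*h2*h3*h3*c1)/12 + (((-2:ℝ)/5)*h1*h2*h3*h3*h3*c3 + ((-1:ℝ)/5)*h1*h2*h2*h3*h3*c2 + ((2:ℝ)/5)*h1*h1*h2*h3*h3*c1)/24 + (((-1:ℝ)/5)*h1*h2*h3*h3*h3*c3 + ((-1:ℝ)/5)*h1*h2*h2*h3*h3*c2 + ((1:ℝ)/5)*h1*h1*h2*h3*h3*c1)/12 + 0/20 + 0/60 + 0/60 + 0/20 := by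
      unfold faceFluxMoment
      exact tri_integral _ (((3:ℝ)/10)*h1*h2*h3*h3*c0 + ((3:ℝ)/10)*h1*h1*h2*h3*h3*c1) (((-1:ℝ)/5)*h1*h2*h3*h3*c0 + ((3:ℝ)/10)*h1*h2*h3*h3*h3*c3 + ((-1:ℝ)/2)*h1*h1*h2*h3*h3*c1) (((-1:ℝ)/5)*h1*h2*h3*h3*c0 + ((3:ℝ)/10)*h1*h2*h3*h3*h3*c3 + ((3:ℝ)/10)*h1*h2*h2*h3*h3*c2 + ((-1:ℝ)/2)*h1*h1*h2*h3*h3*c1) (((-1:ℝ)/5)*h1*h2*h3*h3*h3*c3 + ((1:ℝ)/5)*h1*h1*h2*h3*h3*c1) (((-2:ℝ)/5)*h1*h2*h3*h3*h3*c3 + ((-1:ℝ)/5)*h1*h2*h2*h3*h3*c2 + ((2:ℝ)/5)*h1*h1*h2*h3*h3*c1) (((-1:ℝ)/5)*h1*h2*h3*h3*h3*c3 + ((-1:ℝ)/5)*h1*h2*h2*h3*h3*c2 + ((1:ℝ)/5)*h1*h1*h2*h3*h3*c1) 0 0 0 0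
        (by intro s t
            simp only [dot3, pField3, uField3, Prod.mk_add_mk, Prod.mk_sub_mk, Prod.smul_mk,
              smul_eq_mul]
            ring)
    have Lu : faceFluxMoment (uField3) (h1,0,0) (0,0,h3) (0,h2,h3) (h2*h3, 0, h1*h2)
        (fun p => c0 + c1 * p.1 + c2 * p.2.1 + c3 * p.2.2) =
        0/2 + ((1:ℝ)*h1*h2*h3*h3*c0 + (1:ℝ)*h1*h1*h2*h3*h3*c1)/6 + ((1:ℝ)*h1*h2*h3*h3*c0 + (1:ℝ)*h1*h1*h2*h3*h3*c1)/6 + ((-1:ℝ)*h1*h2*h3*h3*c0 + (1:ℝ)*h1*h2*h3*h3*h3*c3 + (-2:ℝ)*h1*h1*h2*h3*h3*c1)/12 + ((-2:ℝ)*h1*h2*h3*h3*c0 + (2:ℝ)*h1*h2*h3*h3*h3*c3 + (1:ℝ)*h1*h2*h2*h3*h3*c2 + (-4:ℝ)*h1*h1*h2*h3*h3*c1)/24 + ((-1:ℝ)*h1*h2*h3*h3*c0 + (1:ℝ)*h1*h2*h3*h3*h3*c3 + (1:ℝ)*h1*h2*h2*h3*h3*c2 + (-2:ℝ)*h1*h1*h2*h3*h3*c1)/12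 + ((-1:ℝ)*h1*h2*h3*h3*h3*c3 + (1:ℝ)*h1*h1*h2*h3*h3*c1)/20 + ((-3:ℝ)*h1*h2*h3*h3*h3*c3 + (-1:ℝ)*h1*h2*h2*h3*h3*c2 + (3:ℝ)*h1*h1*h2*h3*h3*c1)/60 + ((-3:ℝ)*h1*h2*h3*h3*h3*c3 + (-2:ℝ)*h1*h2*h2*h3*h3*c2 + (3:ℝ)*h1*h1*h2*h3*h3*c1)/60 + ((-1:ℝ)*h1*h2*h3*h3*h3*c3 + (-1:ℝ)*h1*h2*h2*h3*h3*c2 + (1:ℝ)*h1*h1*h2*h3*h3*c1)/20 := by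
      unfold faceFluxMoment
      exact tri_integral _ 0 ((1:ℝ)*h1*h2*h3*h3*c0 + (1:ℝ)*h1*h1*h2*h3*h3*c1) ((1:ℝ)*h1*h2*h3*h3*c0 + (1:ℝ)*h1*h1*h2*h3*h3*c1) ((-1:ℝ)*h1*h2*h3*h3*c0 + (1:ℝ)*h1*h2*h3*h3*h3*c3 + (-2:ℝ)*h1*h1*h2*h3*h3*c1) ((-2:ℝ)*h1*h2*h3*h3*c0 + (2:ℝ)*h1*h2*h3*h3*h3*c3 + (1:ℝ)*h1*h2*h2*h3*h3*c2 + (-4:ℝ)*h1*h1*h2*h3*h3*c1) ((-1:ℝ)*h1*h2*h3*h3*c0 + (1:ℝ)*h1*h2*h3*h3*h3*c3 + (1:ℝ)*h1*h2*h2*h3*h3*c2 + (-2:ℝ)*h1*h1*h2*h3*h3*c1) ((-1:ℝ)*h1*h2*h3*h3*h3*c3 + (1:ℝ)*h1*h1*h2*h3*h3*c1) ((-3:ℝ)*h1*h2*h3*h3*h3*c3 + (-1:ℝ)*h1*h2*h2*h3*h3*c2 + (3:ℝ)*h1*h1*h2*h3*h3*c1) ((-3:ℝ)*h1*h2*h3*h3*h3*c3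 + (-2:ℝ)*h1*h2*h2*h3*h3*c2 + (3:ℝ)*h1*h1*h2*h3*h3*c1) ((-1:ℝ)*h1*h2*h3*h3*h3*c3 + (-1:ℝ)*h1*h2*h2*h3*h3*c2 + (1:ℝ)*h1*h1*h2*h3*h3*c1)
        (by intro s t
            simp only [dot3, pField3, uField3, Prod.mk_add_mk, Prod.mk_sub_mk, Prod.smul_mk,
              smul_eq_mul]
            ring)
    rw [Lp, Lu]; try ring
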